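/- Let ⟨W,R⟩ be a directed graph, n ∈ ℕ, and u an ultrafilter on W. If {w ∈ W : deg⁺(w) ≤ n} ∈ u, then deg⁺(u) ≤ n, i.e. u has at most n distinct R^ue-successors in the ultrafilter extension. -/

import Mathlib

open Set Filter FirstOrder Language

/-- `R⁻(X)`: the set of elements having an `R`-successor in `X`. -/
def Rminus {W : Type*} (R : W → W → Prop) (X : Set W) : Set W := {w | ∃ s ∈ X, R w s}

/-- `R⁺(X)`: the set of elements having an `R`-predecessor in `X`. -/
def Rplus {W : Type*} (R : W → W → Prop) (X : Set W) : Set W := {s | ∃ w ∈ X, R w s}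

/-- The relation of the ultrafilter extension: `R^ue u v ↔ ∀ X ∈ v, R⁻(X) ∈ u`. -/
def ueRel {W : Type*} (R : W → W → Prop) (u v : Ultrafilter W) : Prop :=
  ∀ X ∈ v, Rminus R X ∈ u

/-- Out-degree `deg⁺(w)`, as an extended natural number. -/
noncomputable def degPlus {W : Type*} (R : W → W → Prop) (w : W) : ℕ∞ := {v | R w v}.encard

/-- In-degree `deg⁻(w)`, as an extended natural number. -/
noncomputable def degMinus {W : Type*} (R : W → W → Prop) (w : W) : ℕ∞ := {v | R v w}.encard

/-- A directed graph is bounded if `deg(w) = deg⁺(w) + deg⁻(w)` is uniformly bounded. -/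
def Bounded {W : Type*} (R : W → W → Prop) : Prop :=
  ∃ n : ℕ, ∀ w, degPlus R w + degMinus R w ≤ (n : ℕ∞)

/-- A directed graph `⟨W,R⟩` as a structure for the first-order language `L_R` with a
single binary relation symbol (`Language.graph`). -/
def grStruct {W : Type*} (R : W → W → Prop) : Language.graph.Structure W where
  RelMap | .adj => fun x => R (x 0) (x 1)

/-- `D` is ℵ₁-incomplete: some countable family of members of `D` has empty intersection. -/
def Aleph1Incomplete {I : Type*} (D : Ultrafilter I) : Prop :=
  ∃ J : ℕ → Set I, (∀ n, J n ∈ D) ∧ ⋂ n, J n = ∅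

/-- The `n`-Hull `⟨w⟩ⁿ`: `⟨w⟩⁰ = {w}`, `⟨w⟩^{i+1} = ⟨w⟩^i ∪ R⁺(⟨w⟩^i) ∪ R⁻(⟨w⟩^i)`. -/
def hull {W : Type*} (R : W → W → Prop) (w : W) : ℕ → Set W
  | 0 => {w}
  | n + 1 => hull R w n ∪ Rplus R (hull R w n) ∪ Rminus R (hull R w n)

/-- The ω-Hull `⟨w⟩^ω = ⋃ₙ ⟨w⟩ⁿ`. -/
def hullOmega {W : Type*} (R : W → W → Prop) (w : W) : Set W := ⋃ n, hull R w n

/-- A pointed isomorphism between the induced subgraphs on `A ⊆ V` and `A' ⊆ V'`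
sending the base point `a` to `a'`. -/
def PointedIso {V V' : Type*} (R : V → V → Prop) (R' : V' → V' → Prop)
    (A : Set V) (A' : Set V') (a : V) (a' : V') : Prop :=
  ∃ f : V → V', Set.BijOn f A A' ∧ f a = a' ∧
    ∀ x ∈ A, ∀ y ∈ A, (R x y ↔ R' (f x) (f y))

/-- if `{w : deg⁺(w) ≤ n} ∈ u` then `u` has at most `n` `R^ue`-successors. -/

theorem stmt_1 {W : Type*} (R : W → W → Prop) (n : ℕ) (u : Ultrafilter W)
    (h : {w : W | degPlus R w ≤ (n : ℕ∞)} ∈ u) :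
    {v : Ultrafilter W | ueRel R u v}.encard ≤ (n : ℕ∞) := by
  classical
  by_contra hlt
  push_neg at hlt
  have hle : ((n : ℕ∞) + 1) ≤ {v : Ultrafilter W | ueRel R u v}.encard :=
    (ENat.add_one_le_iff (by simp)).2 hlt
  obtain ⟨T, hTsub, hTcard⟩ := Set.exists_subset_encard_eq hle
  have hTcard' : T.encard = ((n + 1 : ℕ) : ℕ∞) := by
    rw [hTcard]; push_cast; ring
  have hTfin : T.Finite := Set.finite_of_encard_eq_coe hTcard'
  -- separate distinct ultrafilters
  have sep : ∀ v v' : Ultrafilter W, v ≠ v' → ∃ Y : Set W, Y ∈ v ∧ Yᶜ ∈ v' := by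
    intro v v' hne
    have hnle : ¬ (v' : Filter W) ≤ (v : Filter W) := fun hh =>
      hne (Ultrafilter.coe_le_coe.1 hh).symm
    rw [Filter.le_def] at hnle
    push_neg at hnle
    obtain ⟨Y, hYv, hYv'⟩ := hnle
    exact ⟨Y, hYv, (Ultrafilter.compl_mem_iff_notMem).2 hYv'⟩
  -- choice function for separating sets
  have hY : ∀ v v' : Ultrafilter W, ∃ Y : Set W, v ≠ v' → Y ∈ v ∧ Yᶜ ∈ v' := by
    intro v v'
    by_cases hne : v = v'
    · exact ⟨Set.univ, fun hc => absurd hne hc⟩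
    · obtain ⟨Y, hY⟩ := sep v v' hne
      exact ⟨Y, fun _ => hY⟩
  choose Y hYmem using hY
  -- pairwise disjoint sets X v ∈ v for v ∈ T
  set X : Ultrafilter W → Set W := fun v => ⋂ v' ∈ T \ {v}, (Y v v' ∩ (Y v' v)ᶜ) with hX
  have hXmem : ∀ v : Ultrafilter W, X v ∈ v := by
    intro v
    refine (Filter.biInter_mem (hTfin.diff)).2 ?_
    intro v' hv'
    have hne : v ≠ v' := fun hc => hv'.2 (by simp [hc.symm])
    exact Filter.inter_mem (hYmem v v' hne).1 (hYmem v' v hne.symm).2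
  have hXdisj : ∀ v ∈ T, ∀ v' ∈ T, v ≠ v' → X v ∩ X v' = ∅ := by
    intro v hv v' hv' hne
    apply Set.eq_empty_of_forall_notMem
    rintro x ⟨hx1, hx2⟩
    have hm1 : v' ∈ T \ {v} := ⟨hv', by simp [hne.symm]⟩
    have hm2 : v ∈ T \ {v'} := ⟨hv, by simp [hne]⟩
    have h1 : x ∈ Y v v' ∩ (Y v' v)ᶜ := Set.mem_iInter₂.1 hx1 v' hm1
    have h2 : x ∈ Y v' v ∩ (Y v v')ᶜ := Set.mem_iInter₂.1 hx2 v hm2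
    exact h2.2 h1.1
  -- find a witness w
  have hbig : {w : W | degPlus R w ≤ (n : ℕ∞)} ∩ ⋂ v ∈ T, Rminus R (X v) ∈ u := by
    refine Filter.inter_mem h ((Filter.biInter_mem hTfin).2 ?_)
    intro v hv
    exact hTsub hv (X v) (hXmem v)
  obtain ⟨w, hwdeg, hwR⟩ := Filter.nonempty_of_mem hbig
  -- for each v ∈ T, pick a successor in X v
  have hsucc : ∀ v : Ultrafilter W, ∃ s : W, v ∈ T → s ∈ X v ∧ R w s := by
    intro v
    by_cases hv : v ∈ T
    · obtain ⟨s, hs, hrs⟩ := Set.mem_iInter₂.1 hwR v hv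
      exact ⟨s, fun _ => ⟨hs, hrs⟩⟩
    · exact ⟨w, fun hc => absurd hc hv⟩
  choose f hf using hsucc
  have hinj : Set.InjOn f T := by
    intro v hv v' hv' hfe
    by_contra hne
    have := hXdisj v hv v' hv' hne
    have hmem : f v ∈ X v ∩ X v' := ⟨(hf v hv).1, hfe ▸ (hf v' hv').1⟩
    rw [this] at hmem
    exact hmem
  have himg : f '' T ⊆ {s | R w s} := by
    rintro s ⟨v, hv, rfl⟩
    exact (hf v hv).2
  have : ((n : ℕ∞) + 1) ≤ degPlus R w := by
    calc ((n : ℕ∞) + 1) = T.encard := hTcard.symm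
    _ = (f '' T).encard := (hinj.encard_image).symm
    _ ≤ {s | R w s}.encard := Set.encard_le_encard himg
    _ = degPlus R w := rfl
  have hcon : ((n : ℕ∞) + 1) ≤ (n : ℕ∞) := this.trans hwdeg
  exact lt_irrefl _ ((ENat.add_one_le_iff (by simp)).1 hcon)
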